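/- Order preservation of the dynamic relay (Lemma 2.2): Let u₁, u₂ ∈ L²(0,T), ξ₁, ξ₂ ∈ [−1,1] and k > 0. If u₁(t) ≤ u₂(t) for a.e. t ∈ [0,T] and ξ₁ ≤ ξ₂, and y₁, y₂ are the dynamic relay solutions for (u₁, ξ₁) and (u₂, ξ₂) respectively, then y₁(t) ≤ y₂(t) for all t ∈ [0,T]. -/

import Mathlib

open MeasureTheory Set

/-- The function `g(u) = k·(u − ρ₂)⁺ − k·(ρ₁ − u)⁺` driving the dynamic relay. -/
noncomputable def relayG (ρ₁ ρ₂ k u : ℝ) : ℝ :=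
  k * max (u - ρ₂) 0 - k * max (ρ₁ - u) 0

/-- `y` (with a.e. derivative `y'`) is a dynamic relay solution on `[0,T]` for input `u`
and initial state `ξ`: `y ∈ H¹(0,T)` (encoded by `y' ∈ L²(0,T)` together with the
fundamental-theorem-of-calculus representation), `y(0) = ξ`, `|y| ≤ 1` on `[0,T]`, and
`q(t) := g(u(t)) − y'(t)` satisfies `q(t)(z − y(t)) ≤ 0` for all `z ∈ [−1,1]`, a.e. `t`. -/
def IsDynRelay (T ρ₁ ρ₂ k : ℝ) (u : ℝ → ℝ) (ξ : ℝ) (y y' : ℝ → ℝ) : Prop :=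
  MemLp y' 2 (volume.restrict (Ioc (0:ℝ) T)) ∧
  y 0 = ξ ∧
  (∀ t ∈ Icc (0:ℝ) T, y t = ξ + ∫ s in (0:ℝ)..t, y' s) ∧
  (∀ t ∈ Icc (0:ℝ) T, |y t| ≤ 1) ∧
  (∀ᵐ t ∂(volume.restrict (Ioo (0:ℝ) T)),
    ∀ z ∈ Icc (-1:ℝ) 1, (relayG ρ₁ ρ₂ k (u t) - y' t) * (z - y t) ≤ 0)

lemma relayG_mono {ρ₁ ρ₂ k : ℝ} (hk : 0 ≤ k) {a b : ℝ} (h : a ≤ b) :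
    relayG ρ₁ ρ₂ k a ≤ relayG ρ₁ ρ₂ k b := by
  unfold relayG
  have h1 : max (a - ρ₂) 0 ≤ max (b - ρ₂) 0 := max_le_max (by linarith) le_rfl
  have h2 : max (ρ₁ - b) 0 ≤ max (ρ₁ - a) 0 := max_le_max (by linarith) le_rfl
  nlinarith [mul_le_mul_of_nonneg_left h1 hk, mul_le_mul_of_nonneg_left h2 hk]

/-- Order preservation of the dynamic relay (Lemma 2.2). -/
theorem dyn_relay_order_preservation (T ρ₁ ρ₂ k : ℝ)
    (hT : 0 < T) (hρ : ρ₁ < ρ₂) (hk : 0 < k)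
    (u₁ u₂ : ℝ → ℝ)
    (hu₁ : MemLp u₁ 2 (volume.restrict (Ioc (0:ℝ) T)))
    (hu₂ : MemLp u₂ 2 (volume.restrict (Ioc (0:ℝ) T)))
    (ξ₁ ξ₂ : ℝ) (hξ₁ : ξ₁ ∈ Icc (-1:ℝ) 1) (hξ₂ : ξ₂ ∈ Icc (-1:ℝ) 1)
    (hule : ∀ᵐ t ∂(volume.restrict (Icc (0:ℝ) T)), u₁ t ≤ u₂ t) (hξle : ξ₁ ≤ ξ₂)
    (y₁ y₁' y₂ y₂' : ℝ → ℝ)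
    (h₁ : IsDynRelay T ρ₁ ρ₂ k u₁ ξ₁ y₁ y₁')
    (h₂ : IsDynRelay T ρ₁ ρ₂ k u₂ ξ₂ y₂ y₂') :
    ∀ t ∈ Icc (0:ℝ) T, y₁ t ≤ y₂ t := by
  obtain ⟨hL1, h01, hrep1, hbd1, hVI1⟩ := h₁
  obtain ⟨hL2, h02, hrep2, hbd2, hVI2⟩ := h₂
  haveI : IsFiniteMeasure (volume.restrict (Ioc (0:ℝ) T)) := by
    constructor
    rw [Measure.restrict_apply_univ, Real.volume_Ioc]
    exact ENNReal.ofReal_lt_top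
  -- integrability on `Ioc 0 T`
  have hI1 : IntegrableOn y₁' (Ioc (0:ℝ) T) volume := hL1.integrable (by norm_num)
  have hI2 : IntegrableOn y₂' (Ioc (0:ℝ) T) volume := hL2.integrable (by norm_num)
  have hI1c : IntegrableOn y₁' (Icc (0:ℝ) T) volume :=
    (integrableOn_Icc_iff_integrableOn_Ioc).2 hI1
  have hI2c : IntegrableOn y₂' (Icc (0:ℝ) T) volume :=
    (integrableOn_Icc_iff_integrableOn_Ioc).2 hI2
  -- continuity of y₁, y₂ on [0, T]
  have hc1 : ContinuousOn y₁ (Icc (0:ℝ) T) := by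
    have : ContinuousOn (fun t => ξ₁ + ∫ s in Ioc (0:ℝ) t, y₁' s) (Icc (0:ℝ) T) :=
      (continuousOn_const.add (intervalIntegral.continuousOn_primitive hI1c))
    refine this.congr (fun t ht => ?_)
    rw [hrep1 t ht, intervalIntegral.integral_of_le ht.1]
  have hc2 : ContinuousOn y₂ (Icc (0:ℝ) T) := by
    have : ContinuousOn (fun t => ξ₂ + ∫ s in Ioc (0:ℝ) t, y₂' s) (Icc (0:ℝ) T) :=
      (continuousOn_const.add (intervalIntegral.continuousOn_primitive hI2c))
    refine this.congr (fun t ht => ?_)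
    rw [hrep2 t ht, intervalIntegral.integral_of_le ht.1]
  -- a.e. key inequality
  have hae : ∀ᵐ t ∂(volume.restrict (Ioo (0:ℝ) T)),
      y₂ t < y₁ t → y₁' t - y₂' t ≤ 0 := by
    have hule' : ∀ᵐ t ∂(volume.restrict (Ioo (0:ℝ) T)), u₁ t ≤ u₂ t :=
      ae_restrict_of_ae_restrict_of_subset Ioo_subset_Icc_self hule
    filter_upwards [hVI1, hVI2, hule', ae_restrict_mem measurableSet_Ioo]
      with t hA hB hu ht hgt
    have ht' : t ∈ Icc (0:ℝ) T := Ioo_subset_Icc_self ht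
    have hz2 : y₂ t ∈ Icc (-1:ℝ) 1 := abs_le.1 (hbd2 t ht')
    have hz1 : y₁ t ∈ Icc (-1:ℝ) 1 := abs_le.1 (hbd1 t ht')
    have hA' := hA (y₂ t) hz2
    have hB' := hB (y₁ t) hz1
    have hg : relayG ρ₁ ρ₂ k (u₁ t) ≤ relayG ρ₁ ρ₂ k (u₂ t) := relayG_mono hk.le hu
    nlinarith [hA', hB', hg, hgt,
      mul_nonneg (sub_nonneg.2 hg) (sub_nonneg.2 hgt.le)]
  -- main argument
  intro t₀ ht₀
  by_contra hcon
  push_neg at hcon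
  -- the set where y₁ ≤ y₂ up to t₀
  set S : Set ℝ := Icc 0 t₀ ∩ {s | y₁ s ≤ y₂ s} with hS
  have hSne : S.Nonempty :=
    ⟨0, ⟨le_rfl, ht₀.1⟩, show y₁ 0 ≤ y₂ 0 by rw [h01, h02]; exact hξle⟩
  have hSbdd : BddAbove S := ⟨t₀, fun s hs => hs.1.2⟩
  have hsubIcc : Icc 0 t₀ ⊆ Icc (0:ℝ) T := Icc_subset_Icc le_rfl ht₀.2
  have hScl : IsClosed S := by
    have hcw : ContinuousOn (fun s => y₂ s - y₁ s) (Icc 0 t₀) :=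
      ((hc2.mono hsubIcc).sub (hc1.mono hsubIcc))
    have : S = Icc 0 t₀ ∩ (fun s => y₂ s - y₁ s) ⁻¹' (Ici 0) := by
      ext s; simp [hS, sub_nonneg]
    rw [this]
    exact hcw.preimage_isClosed_of_isClosed isClosed_Icc isClosed_Ici
  set s₀ := sSup S with hs₀def
  have hs₀mem : s₀ ∈ S := hScl.csSup_mem hSne hSbdd
  have hs₀0 : 0 ≤ s₀ := hs₀mem.1.1
  have hs₀t₀ : s₀ ≤ t₀ := hs₀mem.1.2
  have hs₀le : y₁ s₀ ≤ y₂ s₀ := hs₀mem.2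
  have hs₀lt : s₀ < t₀ := lt_of_le_of_ne hs₀t₀ (by
    intro heq
    rw [heq] at hs₀le
    exact absurd hs₀le (not_le.2 hcon))
  -- on (s₀, t₀], y₂ < y₁
  have hpos : ∀ s, s₀ < s → s ≤ t₀ → y₂ s < y₁ s := by
    intro s hs hst
    by_contra hle
    push_neg at hle
    have : s ∈ S := ⟨⟨hs₀0.trans hs.le, hst⟩, hle⟩
    exact absurd (le_csSup hSbdd this) (not_le.2 hs)
  -- interval integrability
  have hiv : ∀ (f : ℝ → ℝ), IntegrableOn f (Ioc (0:ℝ) T) volume →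
      ∀ a b : ℝ, 0 ≤ a → a ≤ b → b ≤ T → IntervalIntegrable f volume a b := by
    intro f hf a b ha hab hbT
    rw [intervalIntegrable_iff_integrableOn_Ioc_of_le hab]
    exact hf.mono_set (Ioc_subset_Ioc ha hbT)
  have hii1a : IntervalIntegrable y₁' volume 0 s₀ :=
    hiv _ hI1 0 s₀ le_rfl hs₀0 (hs₀t₀.trans ht₀.2)
  have hii1b : IntervalIntegrable y₁' volume s₀ t₀ :=
    hiv _ hI1 s₀ t₀ hs₀0 hs₀t₀ ht₀.2
  have hii2a : IntervalIntegrable y₂' volume 0 s₀ :=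
    hiv _ hI2 0 s₀ le_rfl hs₀0 (hs₀t₀.trans ht₀.2)
  have hii2b : IntervalIntegrable y₂' volume s₀ t₀ :=
    hiv _ hI2 s₀ t₀ hs₀0 hs₀t₀ ht₀.2
  -- FTC identities
  have hs₀Icc : s₀ ∈ Icc (0:ℝ) T := ⟨hs₀0, hs₀t₀.trans ht₀.2⟩
  have heq1 : y₁ t₀ - y₁ s₀ = ∫ s in s₀..t₀, y₁' s := by
    rw [hrep1 t₀ ht₀, hrep1 s₀ hs₀Icc]
    have := intervalIntegral.integral_add_adjacent_intervals hii1a hii1b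
    linarith [this]
  have heq2 : y₂ t₀ - y₂ s₀ = ∫ s in s₀..t₀, y₂' s := by
    rw [hrep2 t₀ ht₀, hrep2 s₀ hs₀Icc]
    have := intervalIntegral.integral_add_adjacent_intervals hii2a hii2b
    linarith [this]
  -- the integral of the difference is nonpositive
  have hdiff : ∫ s in s₀..t₀, (y₁' s - y₂' s) ≤ 0 := by
    rw [intervalIntegral.integral_of_le hs₀lt.le, integral_Ioc_eq_integral_Ioo]
    apply integral_nonpos_of_ae
    have hsub : Ioo s₀ t₀ ⊆ Ioo (0:ℝ) T := Ioo_subset_Ioo hs₀0 ht₀.2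
    have hae' : ∀ᵐ t ∂(volume.restrict (Ioo s₀ t₀)),
        y₂ t < y₁ t → y₁' t - y₂' t ≤ 0 :=
      ae_restrict_of_ae_restrict_of_subset hsub hae
    filter_upwards [hae', ae_restrict_mem measurableSet_Ioo] with t h ht
    exact h (hpos t ht.1 ht.2.le)
  rw [intervalIntegral.integral_sub hii1b hii2b] at hdiff
  have : y₁ t₀ ≤ y₂ t₀ := by linarith [heq1, heq2, hs₀le]
  exact absurd this (not_le.2 hcon)
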